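/- Let γ ∈ (0, 1/2) and let S, T be independent random variables uniformly distributed on (0,1). Define X = min(S,T)^γ · max(S,T)^{1−γ}. Then there exists a constant C' < ∞ such that P(X ≤ ε) ≤ C'·ε² for all ε > 0. -/

import Mathlib

open MeasureTheory

/-- Core real-analysis lemma: if `0 < m ≤ M` and `m^γ M^{1-γ} ≤ ε`, then there is a dyadic
scale `k` with `m ∈ (ε/2^{k+1}, ε/2^k]` and `M ≤ ε (2^{k+1})^{γ/(1-γ)}`. -/
lemma stmt6_aux_cover {γ ε m M : ℝ} (hγ0 : 0 < γ) (hγ1 : γ < 1) (hε : 0 < ε)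
    (hm : 0 < m) (hmM : m ≤ M) (hX : m ^ γ * M ^ (1 - γ) ≤ ε) :
    ∃ k : ℕ, (ε / 2 ^ (k + 1) < m ∧ m ≤ ε / 2 ^ k) ∧
      M ≤ ε * ((2 : ℝ) ^ (k + 1)) ^ (γ / (1 - γ)) := by
  classical
  have h1γ : (0 : ℝ) < 1 - γ := by linarith
  have hM : 0 < M := lt_of_lt_of_le hm hmM
  -- m ≤ ε
  have hmε : m ≤ ε := by
    have h1 : m ^ γ * m ^ (1 - γ) = m := by
      rw [← Real.rpow_add hm]; norm_num
    have h2 : m ^ (1 - γ) ≤ M ^ (1 - γ) := Real.rpow_le_rpow hm.le hmM h1γ.le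
    have h3 : m ^ γ * m ^ (1 - γ) ≤ m ^ γ * M ^ (1 - γ) :=
      mul_le_mul_of_nonneg_left h2 (Real.rpow_nonneg hm.le γ)
    calc m = m ^ γ * m ^ (1 - γ) := h1.symm
      _ ≤ m ^ γ * M ^ (1 - γ) := h3
      _ ≤ ε := hX
  -- find the dyadic scale
  have hex : ∃ n : ℕ, ε / 2 ^ (n + 1) < m := by
    obtain ⟨n, hn⟩ := pow_unbounded_of_one_lt (R := ℝ) (ε / m) (by norm_num : (1 : ℝ) < 2)
    refine ⟨n, ?_⟩
    have h2 : (0 : ℝ) < 2 ^ (n + 1) := by positivity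
    rw [div_lt_iff₀ h2]
    have : ε < m * 2 ^ n := by
      have := (div_lt_iff₀ hm).mp hn
      linarith [this]
    have hpow : (2 : ℝ) ^ n ≤ 2 ^ (n + 1) := by
      apply pow_le_pow_right₀ (by norm_num) (by omega)
    nlinarith [hm]
  let k := Nat.find hex
  have hk1 : ε / 2 ^ (k + 1) < m := Nat.find_spec hex
  have hk2 : m ≤ ε / 2 ^ k := by
    rcases Nat.eq_zero_or_pos k with h0 | hpos
    · rw [h0]; simpa using hmε
    · obtain ⟨j, hj⟩ := Nat.exists_eq_succ_of_ne_zero hpos.ne'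
      have hjk : j < k := by rw [hj]; exact Nat.lt_succ_self j
      have := Nat.find_min hex hjk
      push_neg at this
      rw [hj]
      simpa using this
  refine ⟨k, ⟨hk1, hk2⟩, ?_⟩
  -- bound on M
  set a : ℝ := ε / 2 ^ (k + 1) with ha_def
  have ha : 0 < a := by positivity
  have haγ : a ^ γ ≤ m ^ γ := Real.rpow_le_rpow ha.le hk1.le hγ0.le
  have haγpos : 0 < a ^ γ := Real.rpow_pos_of_pos ha γ
  have hMa : M ^ (1 - γ) ≤ ε / a ^ γ := by
    rw [le_div_iff₀ haγpos]
    calc M ^ (1 - γ) * a ^ γ ≤ M ^ (1 - γ) * m ^ γ :=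
          mul_le_mul_of_nonneg_left haγ (Real.rpow_nonneg hM.le _)
      _ = m ^ γ * M ^ (1 - γ) := by ring
      _ ≤ ε := hX
  have hMle : M ≤ (ε / a ^ γ) ^ (1 / (1 - γ)) := by
    have h1 : M = (M ^ (1 - γ)) ^ (1 / (1 - γ)) := by
      rw [← Real.rpow_mul hM.le, mul_one_div, div_self h1γ.ne', Real.rpow_one]
    rw [h1]
    exact Real.rpow_le_rpow (Real.rpow_nonneg hM.le _) hMa (by positivity)
  refine hMle.trans (le_of_eq ?_)
  -- compute (ε / a^γ)^(1/(1-γ)) = ε * (2^(k+1))^(γ/(1-γ))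
  set q : ℝ := (2 : ℝ) ^ (k + 1) with hq_def
  have hq : 0 < q := by positivity
  have h1 : a ^ γ = ε ^ γ / q ^ γ := Real.div_rpow hε.le hq.le γ
  have h2 : ε / a ^ γ = ε ^ (1 - γ) * q ^ γ := by
    rw [h1, div_div_eq_mul_div, Real.rpow_sub hε, Real.rpow_one]
    ring
  rw [h2, Real.mul_rpow (Real.rpow_nonneg hε.le _) (Real.rpow_nonneg hq.le _),
    ← Real.rpow_mul hε.le, ← Real.rpow_mul hq.le, mul_one_div, div_self h1γ.ne',
    Real.rpow_one, mul_one_div]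

/-- For `γ ∈ (0, 1/2)` and `S, T` independent `Uniform(0,1)`, the preferential attachment
kernel `X = min(S,T)^γ max(S,T)^{1-γ}` satisfies `P(X ≤ ε) ≤ C' ε²` for all `ε > 0`. -/
theorem stmt_6 {Ω : Type*} [MeasurableSpace Ω] (μ : Measure Ω) [IsProbabilityMeasure μ]
    (γ : ℝ) (hγ0 : 0 < γ) (hγ : γ < 1 / 2)
    (S T : Ω → ℝ) (hSmeas : Measurable S) (hTmeas : Measurable T)
    (hindep : ProbabilityTheory.IndepFun S T μ)
    (hS : μ.map S = volume.restrict (Set.Ioo (0 : ℝ) 1))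
    (hT : μ.map T = volume.restrict (Set.Ioo (0 : ℝ) 1)) :
    ∃ C' : ℝ, 0 < C' ∧ ∀ ε : ℝ, 0 < ε →
      μ {ω | min (S ω) (T ω) ^ γ * max (S ω) (T ω) ^ (1 - γ) ≤ ε}
        ≤ ENNReal.ofReal (C' * ε ^ 2) := by
  have hγ1 : γ < 1 := by linarith
  have h1γ : (0 : ℝ) < 1 - γ := by linarith
  set β : ℝ := γ / (1 - γ) with hβ_def
  have hβ0 : 0 < β := by positivity
  have hβ1 : β < 1 := by
    rw [hβ_def, div_lt_one h1γ]; linarith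
  set r : ℝ := (2 : ℝ) ^ (β - 1) with hr_def
  have hr0 : 0 < r := Real.rpow_pos_of_pos (by norm_num) _
  have hr1 : r < 1 := Real.rpow_lt_one_of_one_lt_of_neg (by norm_num) (by linarith)
  have hr1' : 0 < 1 - r := by linarith
  refine ⟨2 * r / (1 - r), by positivity, fun ε hε => ?_⟩
  -- dyadic rectangles
  set I : ℕ → Set ℝ := fun k => Set.Ioc (ε / 2 ^ (k + 1)) (ε / 2 ^ k) with hI_def
  set J : ℕ → Set ℝ := fun k => Set.Iic (ε * ((2 : ℝ) ^ (k + 1)) ^ β) with hJ_def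
  set A : ℕ → Set Ω := fun k => S ⁻¹' I k ∩ T ⁻¹' J k with hA_def
  set B : ℕ → Set Ω := fun k => T ⁻¹' I k ∩ S ⁻¹' J k with hB_def
  set N : Set Ω := S ⁻¹' (Set.Ioo (0 : ℝ) 1)ᶜ ∪ T ⁻¹' (Set.Ioo (0 : ℝ) 1)ᶜ with hN_def
  -- covering
  have hsub : {ω | min (S ω) (T ω) ^ γ * max (S ω) (T ω) ^ (1 - γ) ≤ ε}
      ⊆ (⋃ k, A k ∪ B k) ∪ N := by
    intro ω hω
    by_cases hSω : S ω ∈ Set.Ioo (0 : ℝ) 1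
    · by_cases hTω : T ω ∈ Set.Ioo (0 : ℝ) 1
      · left
        simp only [Set.mem_setOf_eq] at hω
        rcases le_total (S ω) (T ω) with h | h
        · rw [min_eq_left h, max_eq_right h] at hω
          obtain ⟨k, ⟨hk1, hk2⟩, hk3⟩ := stmt6_aux_cover hγ0 hγ1 hε hSω.1 h hω
          exact Set.mem_iUnion.mpr ⟨k, Or.inl ⟨⟨hk1, hk2⟩, hk3⟩⟩
        · rw [min_eq_right h, max_eq_left h] at hω
          obtain ⟨k, ⟨hk1, hk2⟩, hk3⟩ := stmt6_aux_cover hγ0 hγ1 hε hTω.1 h hω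
          exact Set.mem_iUnion.mpr ⟨k, Or.inr ⟨⟨hk1, hk2⟩, hk3⟩⟩
      · right; right; exact hTω
    · right; left; exact hSω
  -- N is null
  have hN0 : μ N = 0 := by
    apply measure_union_null
    · rw [← Measure.map_apply hSmeas measurableSet_Ioo.compl, hS,
        Measure.restrict_apply measurableSet_Ioo.compl, Set.compl_inter_self]
      simp
    · rw [← Measure.map_apply hTmeas measurableSet_Ioo.compl, hT,
        Measure.restrict_apply measurableSet_Ioo.compl, Set.compl_inter_self]
      simp
  -- measure bounds on rectangles
  have hνI : ∀ k, μ (S ⁻¹' I k) ≤ ENNReal.ofReal (ε / 2 ^ (k + 1)) ∧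
      μ (T ⁻¹' I k) ≤ ENNReal.ofReal (ε / 2 ^ (k + 1)) := by
    intro k
    have key : (volume.restrict (Set.Ioo (0 : ℝ) 1)) (I k)
        ≤ ENNReal.ofReal (ε / 2 ^ (k + 1)) := by
      refine le_trans (Measure.restrict_le_self _) ?_
      rw [hI_def]
      simp only [Real.volume_Ioc]
      apply ENNReal.ofReal_le_ofReal
      rw [div_sub_div _ _ (by positivity : (2:ℝ)^k ≠ 0) (by positivity : (2:ℝ)^(k+1) ≠ 0)]
      rw [div_le_div_iff₀ (by positivity) (by positivity)]
      ring_nf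
      nlinarith [pow_pos (by norm_num : (0:ℝ) < 2) k, hε.le]
    constructor
    · rw [← Measure.map_apply hSmeas measurableSet_Ioc, hS]; exact key
    · rw [← Measure.map_apply hTmeas measurableSet_Ioc, hT]; exact key
  have hνJ : ∀ k, μ (S ⁻¹' J k) ≤ ENNReal.ofReal (ε * ((2 : ℝ) ^ (k + 1)) ^ β) ∧
      μ (T ⁻¹' J k) ≤ ENNReal.ofReal (ε * ((2 : ℝ) ^ (k + 1)) ^ β) := by
    intro k
    have key : (volume.restrict (Set.Ioo (0 : ℝ) 1)) (J k)
        ≤ ENNReal.ofReal (ε * ((2 : ℝ) ^ (k + 1)) ^ β) := by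
      rw [Measure.restrict_apply measurableSet_Iic]
      have hsub2 : Set.Iic (ε * ((2 : ℝ) ^ (k + 1)) ^ β) ∩ Set.Ioo 0 1
          ⊆ Set.Ioc 0 (ε * ((2 : ℝ) ^ (k + 1)) ^ β) := fun x hx => ⟨hx.2.1, hx.1⟩
      refine le_trans (measure_mono hsub2) ?_
      rw [Real.volume_Ioc]
      simp
    constructor
    · rw [← Measure.map_apply hSmeas measurableSet_Iic, hS]; exact key
    · rw [← Measure.map_apply hTmeas measurableSet_Iic, hT]; exact key
  -- each rectangle has measure ≤ ε² r^(k+1)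
  have hterm : ∀ k, μ (A k) + μ (B k) ≤ ENNReal.ofReal (2 * ε ^ 2 * r * r ^ k) := by
    intro k
    have hq : (0 : ℝ) < (2 : ℝ) ^ (k + 1) := by positivity
    have hrect : ∀ x y : Ω → ℝ, μ (x ⁻¹' I k) ≤ ENNReal.ofReal (ε / 2 ^ (k + 1)) →
        μ (y ⁻¹' J k) ≤ ENNReal.ofReal (ε * ((2 : ℝ) ^ (k + 1)) ^ β) →
        μ (x ⁻¹' I k) * μ (y ⁻¹' J k) ≤ ENNReal.ofReal (ε ^ 2 * r ^ (k + 1)) := by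
      intro x y hx hy
      calc μ (x ⁻¹' I k) * μ (y ⁻¹' J k)
          ≤ ENNReal.ofReal (ε / 2 ^ (k + 1)) * ENNReal.ofReal (ε * ((2 : ℝ) ^ (k + 1)) ^ β) :=
            mul_le_mul' hx hy
        _ = ENNReal.ofReal (ε / 2 ^ (k + 1) * (ε * ((2 : ℝ) ^ (k + 1)) ^ β)) :=
            (ENNReal.ofReal_mul (by positivity)).symm
        _ = ENNReal.ofReal (ε ^ 2 * r ^ (k + 1)) := by
            congr 1
            have h1 : ((2 : ℝ) ^ (k + 1)) ^ (β - 1) = r ^ (k + 1) := by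
              rw [hr_def, ← Real.rpow_natCast ((2:ℝ) ^ (β - 1)) (k + 1),
                ← Real.rpow_natCast (2 : ℝ) (k + 1), ← Real.rpow_mul (by norm_num),
                ← Real.rpow_mul (by norm_num), mul_comm]
            rw [← h1, Real.rpow_sub hq, Real.rpow_one]
            field_simp
    have hA : μ (A k) ≤ ENNReal.ofReal (ε ^ 2 * r ^ (k + 1)) := by
      rw [hA_def]
      rw [hindep.measure_inter_preimage_eq_mul _ _ measurableSet_Ioc measurableSet_Iic]
      exact hrect S T (hνI k).1 (hνJ k).2
    have hB : μ (B k) ≤ ENNReal.ofReal (ε ^ 2 * r ^ (k + 1)) := by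
      rw [hB_def]
      have := hindep.symm.measure_inter_preimage_eq_mul (μ := μ)
        (s := I k) (t := J k) measurableSet_Ioc measurableSet_Iic
      rw [this]
      exact hrect T S (hνI k).2 (hνJ k).1
    calc μ (A k) + μ (B k)
        ≤ ENNReal.ofReal (ε ^ 2 * r ^ (k + 1)) + ENNReal.ofReal (ε ^ 2 * r ^ (k + 1)) :=
          add_le_add hA hB
      _ = ENNReal.ofReal (2 * ε ^ 2 * r * r ^ k) := by
          rw [← ENNReal.ofReal_add (by positivity) (by positivity)]
          congr 1
          ring
  -- sum up
  have hsummable : Summable (fun k : ℕ => 2 * ε ^ 2 * r * r ^ k) :=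
    (summable_geometric_of_lt_one hr0.le hr1).mul_left _
  calc μ {ω | min (S ω) (T ω) ^ γ * max (S ω) (T ω) ^ (1 - γ) ≤ ε}
      ≤ μ ((⋃ k, A k ∪ B k) ∪ N) := measure_mono hsub
    _ ≤ μ (⋃ k, A k ∪ B k) + μ N := measure_union_le _ _
    _ = μ (⋃ k, A k ∪ B k) := by rw [hN0, add_zero]
    _ ≤ ∑' k, μ (A k ∪ B k) := measure_iUnion_le _
    _ ≤ ∑' k, (μ (A k) + μ (B k)) := ENNReal.tsum_le_tsum fun k => measure_union_le _ _
    _ ≤ ∑' k, ENNReal.ofReal (2 * ε ^ 2 * r * r ^ k) := ENNReal.tsum_le_tsum hterm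
    _ = ENNReal.ofReal (∑' k, 2 * ε ^ 2 * r * r ^ k) :=
        (ENNReal.ofReal_tsum_of_nonneg (fun k => by positivity) hsummable).symm
    _ = ENNReal.ofReal (2 * r / (1 - r) * ε ^ 2) := by
        congr 1
        rw [tsum_mul_left, tsum_geometric_of_lt_one hr0.le hr1]
        field_simp
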